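/- Let m be an integer and let f : ℝ → ℝ be continuously differentiable on \([m,\infty)\), with f integrable on \([m,\infty)\), f' integrable on \([m,\infty)\), and \(f(x) \to 0\) as \(x \to \infty\). Then the series \(\sum_{k=m}^{\infty} f(k)\) converges and \(\sum_{k=m}^{\infty} f(k) = \int_m^{\infty} f(x)\,dx + \frac{1}{2} f(m) + \int_m^{\infty} \big(x - \lfloor x \rfloor - \tfrac12\big) f'(x)\,dx\). -/

import Mathlib

open MeasureTheory Set Filter intervalIntegral

/-- First-order Euler–Maclaurin formula for an infinite tail: if `f` is `C¹` on
`[m, ∞)`, with `f` and `f'` integrable on `[m, ∞)` and `f(x) → 0` as `x → ∞`,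
then `∑_{k=m}^∞ f(k)` converges and equals
`∫_m^∞ f + f(m)/2 + ∫_m^∞ (x - ⌊x⌋ - 1/2) f'(x) dx`.
The sum over integers `k ≥ m` is indexed by `k = m + j`, `j : ℕ`. -/
theorem euler_maclaurin_tail (m : ℤ) (f : ℝ → ℝ)
    (hf : ContDiffOn ℝ 1 f (Set.Ici (m : ℝ)))
    (hfi : MeasureTheory.IntegrableOn f (Set.Ici (m : ℝ)))
    (hfi' : MeasureTheory.IntegrableOn (derivWithin f (Set.Ici (m : ℝ))) (Set.Ici (m : ℝ)))
    (hf0 : Filter.Tendsto f Filter.atTop (nhds 0)) :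
    Summable (fun j : ℕ => f ((m : ℝ) + j)) ∧
    (∑' j : ℕ, f ((m : ℝ) + j))
      = (∫ x in Set.Ici (m : ℝ), f x) + f m / 2
        + ∫ x in Set.Ici (m : ℝ), (x - ⌊x⌋ - 1 / 2) * derivWithin f (Set.Ici (m : ℝ)) x := by
  set g : ℝ → ℝ := derivWithin f (Set.Ici (m : ℝ)) with hg
  have hcont : ContinuousOn f (Set.Ici (m : ℝ)) := hf.continuousOn
  have hderiv : ∀ x : ℝ, (m : ℝ) < x → HasDerivAt f (g x) x := by
    intro x hx
    have hmem : Set.Ici (m : ℝ) ∈ nhds x := Ici_mem_nhds hx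
    have hd : DifferentiableWithinAt ℝ f (Set.Ici (m : ℝ)) x :=
      (hf.differentiableOn one_ne_zero) x (le_of_lt hx)
    rw [hg, derivWithin_of_mem_nhds hmem]
    exact (hd.differentiableAt hmem).hasDerivAt
  -- FTC for g on [a,b] ⊆ [m, ∞)
  have hFTC : ∀ a b : ℝ, (m : ℝ) ≤ a → a ≤ b → ∫ x in a..b, g x = f b - f a := by
    intro a b ha hab
    have hsub : Set.Icc a b ⊆ Set.Ici (m : ℝ) := fun x hx => le_trans ha hx.1
    refine integral_eq_sub_of_hasDeriv_right_of_le hab (hcont.mono hsub)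
      (fun x hx => (hderiv x (lt_of_le_of_lt ha hx.1)).hasDerivWithinAt) ?_
    rw [intervalIntegrable_iff_integrableOn_Ioc_of_le hab]
    exact hfi'.mono_set (fun x hx => le_trans ha (le_of_lt hx.1))
  -- integrability of the two products on Ici m
  have hfract : ∀ x : ℝ, x - (⌊x⌋ : ℝ) = Int.fract x := fun x => rfl
  have hbdd : ∀ c : ℝ, c ≤ 1 → (1/2 : ℝ) ≤ c →
      Integrable (fun x => (x - (⌊x⌋ : ℝ) - c) * g x)
        (volume.restrict (Set.Ici (m : ℝ))) := by
    intro c hc1 hc2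
    refine Integrable.bdd_mul (c := 1) hfi' ?_ (Filter.Eventually.of_forall fun x => ?_)
    · exact ((measurable_fract.sub measurable_const).aestronglyMeasurable)
    · have h0 := Int.fract_nonneg x
      have h1 := Int.fract_lt_one x
      rw [Real.norm_eq_abs, abs_le]
      rw [hfract x] at *
      constructor <;> nlinarith [h0, h1]
  have hφi : IntegrableOn (fun x => (x - (⌊x⌋ : ℝ) - 1/2) * g x) (Set.Ici (m : ℝ)) :=
    hbdd (1/2) (by norm_num) le_rfl
  have hFi : IntegrableOn (fun x => f x + (x - (⌊x⌋ : ℝ) - 1) * g x) (Set.Ici (m : ℝ)) :=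
    hfi.add (hbdd 1 le_rfl (by norm_num))
  -- per-interval identity
  have key : ∀ j : ℕ, ∫ x in Set.Ioc ((m : ℝ) + j) ((m : ℝ) + j + 1),
      (f x + (x - (⌊x⌋ : ℝ) - 1) * g x) = f ((m : ℝ) + j) := by
    intro j
    set a : ℝ := (m : ℝ) + j with ha
    have hma : (m : ℝ) ≤ a := le_add_of_nonneg_right (Nat.cast_nonneg j)
    have hab : a ≤ a + 1 := by linarith
    -- a.e. equality with the non-floor version on Ioc a (a+1)
    have hflr : ∀ x ∈ Set.Ioo a (a + 1), (⌊x⌋ : ℝ) = a := by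
      intro x hx
      have : ⌊x⌋ = m + (j : ℤ) := by
        rw [Int.floor_eq_iff]
        constructor
        · push_cast; rw [← ha]; exact le_of_lt hx.1
        · push_cast; rw [← ha]; exact hx.2
      rw [this]; push_cast; rw [ha]
    have hae : (fun x => f x + (x - (⌊x⌋ : ℝ) - 1) * g x)
        =ᵐ[volume.restrict (Set.Ioc a (a + 1))]
        (fun x => f x + (x - a - 1) * g x) := by
      have hne : ∀ᵐ x ∂(volume.restrict (Set.Ioc a (a + 1))), x ≠ a + 1 :=
        ae_restrict_of_ae (compl_mem_ae_iff.mpr (Real.volume_singleton))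
      filter_upwards [hne, ae_restrict_mem measurableSet_Ioc] with x hx1 hx2
      have hxo : x ∈ Set.Ioo a (a + 1) := ⟨hx2.1, lt_of_le_of_ne hx2.2 hx1⟩
      rw [hflr x hxo]
    rw [integral_congr_ae hae]
    -- FTC with H x = (x - a - 1) * f x
    have hint : IntervalIntegrable (fun x => f x + (x - a - 1) * g x) volume a (a + 1) := by
      rw [intervalIntegrable_iff_integrableOn_Ioc_of_le hab]
      exact (Integrable.congr
        ((hFi.mono_set (fun x hx => le_trans hma (le_of_lt hx.1))) : _) hae)
    have hHc : ContinuousOn (fun x : ℝ => (x - a - 1) * f x) (Set.Icc a (a + 1)) :=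
      ((continuousOn_id.sub continuousOn_const).sub continuousOn_const).mul
        (hcont.mono (fun x hx => le_trans hma hx.1))
    have hHd : ∀ x ∈ Set.Ioo a (a + 1),
        HasDerivAt (fun x : ℝ => (x - a - 1) * f x) (f x + (x - a - 1) * g x) x := by
      intro x hx
      have hdx : HasDerivAt f (g x) x := hderiv x (lt_of_le_of_lt hma hx.1)
      have := (((hasDerivAt_id x).sub_const a).sub_const 1).mul hdx
      simpa [one_mul, Pi.mul_def] using this
    have := integral_eq_sub_of_hasDeriv_right_of_le hab hHc
      (fun x hx => (hHd x hx).hasDerivWithinAt) hint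
    rw [← intervalIntegral.integral_of_le hab, this]
    ring
  -- sum over the partition
  have hUnion : (⋃ j : ℕ, Set.Ioc ((m : ℝ) + j) ((m : ℝ) + j + 1)) = Set.Ioi (m : ℝ) := by
    ext x
    simp only [Set.mem_iUnion, Set.mem_Ioc, Set.mem_Ioi]
    constructor
    · rintro ⟨j, hj, _⟩
      have : (0 : ℝ) ≤ j := Nat.cast_nonneg j
      linarith
    · intro hx
      have h1 : (1 : ℤ) ≤ ⌈x - (m : ℝ)⌉ := by
        rw [Int.le_ceil_iff]; push_cast; linarith
      have h2 : ((⌈x - (m : ℝ)⌉ - 1).toNat : ℝ) = (⌈x - (m : ℝ)⌉ : ℝ) - 1 := by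
        have h3 : (((⌈x - (m : ℝ)⌉ - 1).toNat : ℤ) : ℝ) = ((⌈x - (m : ℝ)⌉ - 1 : ℤ) : ℝ) := by
          exact_mod_cast congrArg (fun z : ℤ => (z : ℝ)) (Int.toNat_of_nonneg (by omega))
        push_cast at h3 ⊢
        linarith
      refine ⟨(⌈x - m⌉ - 1).toNat, ?_, ?_⟩
      · rw [h2]
        have := Int.ceil_lt_add_one (x - (m : ℝ))
        linarith
      · rw [h2]
        have := Int.le_ceil (x - (m : ℝ))
        linarith
  have hdisj : Pairwise (Function.onFun Disjoint fun j : ℕ => Set.Ioc ((m : ℝ) + j) ((m : ℝ) + j + 1)) := by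
    intro i j hij
    simp only [Function.onFun]
    rw [Set.Ioc_disjoint_Ioc]
    rcases hij.lt_or_gt with h | h
    · have hc : (i : ℝ) + 1 ≤ j := by exact_mod_cast h
      have h1 : min ((m:ℝ)+i+1) ((m:ℝ)+j+1) ≤ (m:ℝ)+i+1 := min_le_left _ _
      have h2 : (m:ℝ)+j ≤ max ((m:ℝ)+i) ((m:ℝ)+j) := le_max_right _ _
      linarith
    · have hc : (j : ℝ) + 1 ≤ i := by exact_mod_cast h
      have h1 : min ((m:ℝ)+i+1) ((m:ℝ)+j+1) ≤ (m:ℝ)+j+1 := min_le_right _ _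
      have h2 : (m:ℝ)+i ≤ max ((m:ℝ)+i) ((m:ℝ)+j) := le_max_left _ _
      linarith
  have hFiIoi : IntegrableOn (fun x => f x + (x - (⌊x⌋ : ℝ) - 1) * g x) (Set.Ioi (m : ℝ)) :=
    hFi.mono_set Set.Ioi_subset_Ici_self
  have hsum : HasSum (fun j : ℕ => f ((m : ℝ) + j))
      (∫ x in Set.Ioi (m : ℝ), (f x + (x - (⌊x⌋ : ℝ) - 1) * g x)) := by
    have := MeasureTheory.hasSum_integral_iUnion
      (fun j : ℕ => measurableSet_Ioc) hdisj (hUnion ▸ hFiIoi)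
    rw [hUnion] at this
    convert this using 2 with j
    · rfl
    exact (key j).symm
  -- compute ∫ g over Ioi m
  have htend : Tendsto (fun n : ℕ => (m : ℝ) + n) atTop atTop :=
    tendsto_atTop_add_const_left _ _ tendsto_natCast_atTop_atTop
  have hgint : ∫ x in Set.Ioi (m : ℝ), g x = - f m := by
    have h1 : Tendsto (fun n : ℕ => ∫ x in (m : ℝ)..((m : ℝ) + n), g x) atTop
        (nhds (∫ x in Set.Ioi (m : ℝ), g x)) :=
      intervalIntegral_tendsto_integral_Ioi (m : ℝ)
        (hfi'.mono_set Set.Ioi_subset_Ici_self) htend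
    have h2 : Tendsto (fun n : ℕ => ∫ x in (m : ℝ)..((m : ℝ) + n), g x) atTop
        (nhds (0 - f m)) := by
      have : (fun n : ℕ => ∫ x in (m : ℝ)..((m : ℝ) + n), g x)
          = fun n : ℕ => f ((m : ℝ) + n) - f m := by
        funext n
        exact hFTC (m : ℝ) ((m : ℝ) + n) le_rfl (le_add_of_nonneg_right (Nat.cast_nonneg n))
      rw [this]
      exact (hf0.comp htend).sub tendsto_const_nhds
    rw [tendsto_nhds_unique h1 h2]; ring
  -- split the integral
  have hsplit : ∫ x in Set.Ioi (m : ℝ), (f x + (x - (⌊x⌋ : ℝ) - 1) * g x)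
      = (∫ x in Set.Ioi (m : ℝ), f x) + f m / 2
        + ∫ x in Set.Ioi (m : ℝ), (x - (⌊x⌋ : ℝ) - 1/2) * g x := by
    have e1 : ∀ x : ℝ, f x + (x - (⌊x⌋ : ℝ) - 1) * g x
        = (f x + (x - (⌊x⌋ : ℝ) - 1/2) * g x) + (-(1/2)) * g x := by
      intro x; ring
    have i1 : Integrable f (volume.restrict (Set.Ioi (m : ℝ))) :=
      hfi.mono_set Set.Ioi_subset_Ici_self
    have i2 : Integrable (fun x => (x - (⌊x⌋ : ℝ) - 1/2) * g x)
        (volume.restrict (Set.Ioi (m : ℝ))) := hφi.mono_set Set.Ioi_subset_Ici_self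
    have i3 : Integrable (fun x => (-(1/2 : ℝ)) * g x)
        (volume.restrict (Set.Ioi (m : ℝ))) :=
      (hfi'.mono_set Set.Ioi_subset_Ici_self).const_mul _
    have i12 : Integrable (fun x => f x + (x - (⌊x⌋ : ℝ) - 1/2) * g x)
        (volume.restrict (Set.Ioi (m : ℝ))) := i1.add i2
    simp_rw [e1]
    rw [integral_add i12 i3, integral_add i1 i2, MeasureTheory.integral_const_mul, hgint]
    ring
  constructor
  · exact hsum.summable
  · rw [hsum.tsum_eq, hsplit, integral_Ici_eq_integral_Ioi, integral_Ici_eq_integral_Ioi]
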